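/- Let x be a complex d×d matrix and s a unitary d×d matrix. Then s * exp(t • x) * sᴴ = exp(t • x) holds for every real t if and only if s * x = x * s. (This is the matrix form of the lemma that the Lie algebra of the commutant group equals the commutant algebra: x generates a one-parameter group commuting with s precisely when x itself commutes with s.) -/

import Mathlib

open Matrix

/-- For a complex `d × d` matrix `x` and a unitary `s`,
`s * exp (t • x) * sᴴ = exp (t • x)` for all real `t` iff `s * x = x * s`. -/
theorem unitary_conj_exp_eq_iff_commute (d : ℕ) (hd : 1 ≤ d)
    (x s : Matrix (Fin d) (Fin d) ℂ) (hs : sᴴ * s = 1) :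
    (∀ t : ℝ, s * NormedSpace.exp (t • x) * sᴴ = NormedSpace.exp (t • x)) ↔
      s * x = x * s := by
  have hs' : s * sᴴ = 1 := mul_eq_one_comm.mp hs
  letI : SeminormedRing (Matrix (Fin d) (Fin d) ℂ) := Matrix.linftyOpSemiNormedRing
  letI : NormedRing (Matrix (Fin d) (Fin d) ℂ) := Matrix.linftyOpNormedRing
  letI : NormedAlgebra ℝ (Matrix (Fin d) (Fin d) ℂ) := Matrix.linftyOpNormedAlgebra
  letI : NormedAlgebra ℂ (Matrix (Fin d) (Fin d) ℂ) := Matrix.linftyOpNormedAlgebra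
  constructor
  · intro h
    have h' : ∀ t : ℝ, s * NormedSpace.exp (t • x) = NormedSpace.exp (t • x) * s := by
      intro t
      have := congrArg (· * s) (h t)
      simpa [mul_assoc, hs, hs'] using this
    have H1 : HasDerivAt (fun t : ℝ => s * NormedSpace.exp (t • x))
        (s * (NormedSpace.exp ((0:ℝ) • x) * x)) 0 :=
      (hasDerivAt_exp_smul_const x (0:ℝ)).const_mul s
    have H2 : HasDerivAt (fun t : ℝ => NormedSpace.exp (t • x) * s)
        (NormedSpace.exp ((0:ℝ) • x) * x * s) 0 :=
      (hasDerivAt_exp_smul_const x (0:ℝ)).mul_const s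
    have H1' : HasDerivAt (fun t : ℝ => NormedSpace.exp (t • x) * s)
        (s * (NormedSpace.exp ((0:ℝ) • x) * x)) 0 := by
      exact (funext h') ▸ H1
    have := H1'.unique H2
    simpa [NormedSpace.exp_zero] using this
  · intro hc t
    have hcomm : Commute s (t • x) := (Commute.smul_right (hc : Commute s x) t)
    have := hcomm.exp_right.eq
    rw [this, mul_assoc, hs', mul_one]
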